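/- Let X and Y be m×m real symmetric positive semidefinite matrices. If there exists t ∈ [0,1) such that -t(X + γ I) ⪯ X − Y ⪯ t(X + γ I) for some γ > 0, then (1/(1+t))·(X + γI)^{-1} ⪯ (Y + γI)^{-1} ⪯ (1/(1−t))·(X + γI)^{-1}. -/

import Mathlib

open Matrix

private lemma posDef_smul' {n : Type*} [Fintype n] {A : Matrix n n ℝ}
    (hA : A.PosDef) {c : ℝ} (hc : 0 < c) : (c • A).PosDef := by
  refine Matrix.PosDef.of_dotProduct_mulVec_pos ?_ fun x hx => ?_
  · unfold Matrix.IsHermitian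
    rw [conjTranspose_smul, hA.1.eq]
    simp
  · have := hA.dotProduct_mulVec_pos hx
    simp only [smul_mulVec, dotProduct_smul, smul_eq_mul]
    exact mul_pos hc this

private lemma posDef_smul_one {n : Type*} [Fintype n] [DecidableEq n]
    {c : ℝ} (hc : 0 < c) : (c • (1 : Matrix n n ℝ)).PosDef := by
  have h1 : (1 : Matrix n n ℝ).PosDef := Matrix.PosDef.one
  exact posDef_smul' h1 hc

private lemma posDef_conj' {n : Type*} [Fintype n] [DecidableEq n]
    {B C : Matrix n n ℝ} (hB : B.PosDef) (hC : IsUnit C) :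
    (Cᴴ * B * C).PosDef := by
  refine Matrix.PosDef.of_dotProduct_mulVec_pos (isHermitian_conjTranspose_mul_mul C hB.1) fun x hx => ?_
  have hinj : Function.Injective (C.mulVec) := Matrix.mulVec_injective_iff_isUnit.mpr hC
  have hCx : C *ᵥ x ≠ 0 := by
    intro h
    apply hx
    have : C *ᵥ x = C *ᵥ 0 := by simpa using h
    exact hinj this
  simpa only [star_mulVec, dotProduct_mulVec, vecMul_vecMul] using hB.dotProduct_mulVec_pos hCx

private lemma one_sub_inv_psd {n : Type*} [Fintype n] [DecidableEq n]
    {M : Matrix n n ℝ} (hM : M.PosDef) (h : (M - 1).PosSemidef) :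
    ((1 : Matrix n n ℝ) - M⁻¹).PosSemidef := by
  have hdet : IsUnit M.det := hM.det_pos.ne'.isUnit
  have hMi := hM.inv
  set T := (open scoped MatrixOrder in CFC.sqrt M⁻¹) with hTdef
  have hTT : T * T = M⁻¹ := by
    open scoped MatrixOrder in exact CFC.sqrt_mul_sqrt_self _ hMi.posSemidef.nonneg
  have hTh : Tᴴ = T := by
    open scoped MatrixOrder in exact (CFC.sqrt_nonneg M⁻¹).posSemidef.1
  have h1 : T * M⁻¹ = M⁻¹ * T := by
    rw [← hTT, ← mul_assoc, mul_assoc]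
  have hcomm : M * T = T * M := by
    calc M * T = M * T * (M⁻¹ * M) := by
          rw [Matrix.nonsing_inv_mul M hdet, mul_one]
      _ = M * (T * M⁻¹) * M := by rw [mul_assoc M T, mul_assoc, mul_assoc]
      _ = M * (M⁻¹ * T) * M := by rw [h1]
      _ = T * M := by
          rw [← mul_assoc, Matrix.mul_nonsing_inv M hdet, one_mul]
  have key : T * (M - 1) * T = 1 - M⁻¹ := by
    have hTMT : T * M * T = 1 := by
      rw [← hcomm, mul_assoc, hTT, Matrix.mul_nonsing_inv M hdet]
    calc T * (M - 1) * T = T * M * T - T * T := by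
          rw [Matrix.mul_sub, Matrix.sub_mul, mul_one]
      _ = 1 - M⁻¹ := by rw [hTMT, hTT]
  have := h.conjTranspose_mul_mul_same T
  rwa [hTh, key] at this

private lemma inv_sub_inv_psd {n : Type*} [Fintype n] [DecidableEq n]
    {A B : Matrix n n ℝ} (hA : A.PosDef) (hB : B.PosDef) (h : (B - A).PosSemidef) :
    (A⁻¹ - B⁻¹).PosSemidef := by
  have hAdet : IsUnit A.det := hA.det_pos.ne'.isUnit
  have hAi := hA.inv
  set R := (open scoped MatrixOrder in CFC.sqrt A⁻¹) with hRdef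
  have hRR : R * R = A⁻¹ := by
    open scoped MatrixOrder in exact CFC.sqrt_mul_sqrt_self _ hAi.posSemidef.nonneg
  have hRh : Rᴴ = R := by
    open scoped MatrixOrder in exact (CFC.sqrt_nonneg A⁻¹).posSemidef.1
  have hRdet : IsUnit R.det := by
    have hd : IsUnit (R.det * R.det) := by
      rw [← Matrix.det_mul, hRR]
      exact hAi.det_pos.ne'.isUnit
    exact isUnit_of_mul_isUnit_left hd
  have hRunit : IsUnit R := (Matrix.isUnit_iff_isUnit_det R).mpr hRdet
  have h1 : R * A⁻¹ = A⁻¹ * R := by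
    rw [← hRR, ← mul_assoc, mul_assoc]
  have hcomm : R * A = A * R := by
    calc R * A = A * (A⁻¹ * R) * A := by
          rw [← mul_assoc, Matrix.mul_nonsing_inv A hAdet, one_mul]
      _ = A * (R * A⁻¹) * A := by rw [h1]
      _ = A * R * (A⁻¹ * A) := by simp only [mul_assoc]
      _ = A * R := by rw [Matrix.nonsing_inv_mul A hAdet, mul_one]
  have hRAR : R * A * R = 1 := by
    rw [hcomm, mul_assoc, hRR, Matrix.mul_nonsing_inv A hAdet]
  set M := R * B * R with hMdef
  have hMpd : M.PosDef := by
    have := posDef_conj' hB hRunit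
    rwa [hRh] at this
  have hM1 : (M - 1).PosSemidef := by
    have := h.conjTranspose_mul_mul_same R
    rw [hRh] at this
    have e : R * (B - A) * R = M - 1 := by
      rw [Matrix.mul_sub, Matrix.sub_mul, hRAR, hMdef]
    rwa [e] at this
  have hinv := one_sub_inv_psd hMpd hM1
  have hMinv : M⁻¹ = R⁻¹ * B⁻¹ * R⁻¹ := by
    rw [hMdef, Matrix.mul_inv_rev, Matrix.mul_inv_rev, ← mul_assoc]
  have key : R * (1 - M⁻¹) * R = A⁻¹ - B⁻¹ := by
    have hRRinv : R * R⁻¹ = 1 := Matrix.mul_nonsing_inv R hRdet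
    have hRinvR : R⁻¹ * R = 1 := Matrix.nonsing_inv_mul R hRdet
    calc R * (1 - M⁻¹) * R = R * R - R * M⁻¹ * R := by
          rw [Matrix.mul_sub, mul_one, Matrix.sub_mul]
      _ = A⁻¹ - B⁻¹ := by
          rw [hRR, hMinv]
          congr 1
          calc R * (R⁻¹ * B⁻¹ * R⁻¹) * R
              = (R * R⁻¹) * B⁻¹ * (R⁻¹ * R) := by
                rw [← mul_assoc, ← mul_assoc, mul_assoc (R * R⁻¹ * B⁻¹)]
            _ = B⁻¹ := by rw [hRRinv, hRinvR, one_mul, mul_one]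
  have := hinv.conjTranspose_mul_mul_same R
  rwa [hRh, key] at this

/-- If `X, Y ⪰ 0` and `−t(X+γI) ⪯ X − Y ⪯ t(X+γI)` with `t ∈ [0,1)` and `γ > 0`,
then `(1/(1+t))(X+γI)⁻¹ ⪯ (Y+γI)⁻¹ ⪯ (1/(1−t))(X+γI)⁻¹`. -/
theorem inverse_sandwich {m : ℕ}
    (X Y : Matrix (Fin m) (Fin m) ℝ) (hX : X.PosSemidef) (hY : Y.PosSemidef)
    (γ t : ℝ) (hγ : 0 < γ) (ht0 : 0 ≤ t) (ht1 : t < 1)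
    (hub : (t • (X + γ • 1) - (X - Y)).PosSemidef)
    (hlb : (t • (X + γ • 1) + (X - Y)).PosSemidef) :
    ((Y + γ • 1)⁻¹ - (1 / (1 + t)) • (X + γ • 1)⁻¹).PosSemidef ∧
      ((1 / (1 - t)) • (X + γ • 1)⁻¹ - (Y + γ • 1)⁻¹).PosSemidef := by
  set A := X + γ • (1 : Matrix (Fin m) (Fin m) ℝ) with hAdef
  set B := Y + γ • (1 : Matrix (Fin m) (Fin m) ℝ) with hBdef
  have hA : A.PosDef := Matrix.PosDef.posSemidef_add hX (posDef_smul_one hγ)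
  have hB : B.PosDef := Matrix.PosDef.posSemidef_add hY (posDef_smul_one hγ)
  have hAdet : IsUnit A.det := hA.det_pos.ne'.isUnit
  have h1t : (0:ℝ) < 1 - t := by linarith
  have h1t' : (0:ℝ) < 1 + t := by linarith
  constructor
  · -- upper: B⁻¹ - (1/(1+t)) A⁻¹ ⪰ 0, from B ⪯ (1+t) A
    have hsm : ((1 + t) • A).PosDef := posDef_smul' hA h1t'
    have hle : ((1 + t) • A - B).PosSemidef := by
      have e : t • A + (X - Y) = (1 + t) • A - B := by
        rw [hAdef, hBdef]; module
      rwa [e] at hlb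
    have := inv_sub_inv_psd hB hsm hle
    have hinv : ((1 + t) • A)⁻¹ = (1 / (1 + t)) • A⁻¹ := by
      letI : Invertible (1 + t) := invertibleOfNonzero h1t'.ne'
      rw [Matrix.inv_smul (A := A) (1 + t) hAdet, invOf_eq_inv, one_div]
    rwa [hinv] at this
  · -- lower: (1/(1-t)) A⁻¹ - B⁻¹ ⪰ 0, from (1-t) A ⪯ B
    have hsm : ((1 - t) • A).PosDef := posDef_smul' hA h1t
    have hle : (B - (1 - t) • A).PosSemidef := by
      have e : t • A - (X - Y) = B - (1 - t) • A := by
        rw [hAdef, hBdef]; module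
      rwa [e] at hub
    have := inv_sub_inv_psd hsm hB hle
    have hinv : ((1 - t) • A)⁻¹ = (1 / (1 - t)) • A⁻¹ := by
      letI : Invertible (1 - t) := invertibleOfNonzero h1t.ne'
      rw [Matrix.inv_smul (A := A) (1 - t) hAdet, invOf_eq_inv, one_div]
    rwa [hinv] at this
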